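/- There exists a finite directed graph G and two nodes u, v of G such that the input trees T_u and T_v are isomorphic, but no automorphism of G maps u to v. -/

import Mathlib

/-- A finite directed multigraph: a node type, an edge type, and source/target maps. -/
structure FinDigraph where
  V : Type
  E : Type
  [finV : Finite V]
  [finE : Finite E]
  src : E → V
  tgt : E → V

attribute [instance] FinDigraph.finV FinDigraph.finE

namespace FinDigraph

/-- The far endpoint of a (reversed) path ending at `u`: the list `[e_k, …, e_1]`
represents the directed path `src e_k → ⋯ → tgt e_1 = u`. -/
def farEnd (G : FinDigraph) (u : G.V) : List G.E → G.V
  | [] => u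
  | e :: _ => G.src e

/-- `l = [e_k, …, e_1]` is a directed path of `G` ending at `u`. -/
def IsInPath (G : FinDigraph) (u : G.V) : List G.E → Prop
  | [] => True
  | e :: es => IsInPath G u es ∧ G.tgt e = G.farEnd u es

/-- The nodes of the input tree of `u`: all directed paths ending at `u`. -/
def InPath (G : FinDigraph) (u : G.V) : Type := {l : List G.E // G.IsInPath u l}

/-- The root of the input tree of `u` (the empty path). -/
def root (G : FinDigraph) (u : G.V) : G.InPath u := ⟨[], trivial⟩

/-- The parent of a path in the input tree (drop the farthest edge); the root is its own parent. -/
def parent (G : FinDigraph) (u : G.V) : G.InPath u → G.InPath u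
  | ⟨[], h⟩ => ⟨[], h⟩
  | ⟨_ :: es, h⟩ => ⟨es, h.1⟩

/-- Isomorphism of input trees: a bijection of paths preserving root, depth and parent. -/
def InTreeIso (G : FinDigraph) (u : G.V) (H : FinDigraph) (v : H.V) : Prop :=
  ∃ F : G.InPath u ≃ H.InPath v,
    F (G.root u) = H.root v ∧
    (∀ p, ((F p).1).length = (p.1).length) ∧
    (∀ p, F (G.parent u p) = H.parent v (F p))

/-- The reverse graph (all edges flipped). -/
def rev (G : FinDigraph) : FinDigraph :=
  { V := G.V, E := G.E, src := G.tgt, tgt := G.src }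

/-- Isomorphism of output trees = isomorphism of input trees in the reverse graphs. -/
def OutTreeIso (G : FinDigraph) (u : G.V) (H : FinDigraph) (v : H.V) : Prop :=
  InTreeIso (rev G) u (rev H) v

/-- A homomorphism of directed multigraphs. -/
structure Hom (G H : FinDigraph) where
  onV : G.V → H.V
  onE : G.E → H.E
  map_src : ∀ e, H.src (onE e) = onV (G.src e)
  map_tgt : ∀ e, H.tgt (onE e) = onV (G.tgt e)

/-- Isomorphism of directed multigraphs. -/
def IsIso (G H : FinDigraph) : Prop :=
  ∃ φ : Hom G H, Function.Bijective φ.onV ∧ Function.Bijective φ.onE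

/-- Fibration equivalence of nodes: isomorphic input trees. -/
def fibEquiv (G : FinDigraph) (u v : G.V) : Prop := InTreeIso G u G v

/-- Covering equivalence of nodes: isomorphic input trees and isomorphic output trees. -/
def covEquiv (G : FinDigraph) (u v : G.V) : Prop :=
  InTreeIso G u G v ∧ OutTreeIso G u G v

/-- Orbit equivalence: some automorphism maps one node to the other. -/
def orbitEquiv (G : FinDigraph) (u v : G.V) : Prop :=
  ∃ φ : Hom G G, Function.Bijective φ.onV ∧ Function.Bijective φ.onE ∧ φ.onV u = v

theorem inTreeIso_refl (G : FinDigraph) (u : G.V) : InTreeIso G u G u :=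
  ⟨Equiv.refl _, rfl, fun _ => rfl, fun _ => rfl⟩

theorem inTreeIso_symm {G : FinDigraph} {u : G.V} {H : FinDigraph} {v : H.V}
    (h : InTreeIso G u H v) : InTreeIso H v G u := by
  obtain ⟨F, hroot, hlen, hpar⟩ := h
  refine ⟨F.symm, ?_, ?_, ?_⟩
  · rw [← hroot, Equiv.symm_apply_apply]
  · intro p; rw [← hlen (F.symm p), Equiv.apply_symm_apply]
  · intro p
    apply F.injective
    rw [Equiv.apply_symm_apply, hpar (F.symm p), Equiv.apply_symm_apply]

theorem inTreeIso_trans {G : FinDigraph} {u : G.V} {H : FinDigraph} {v : H.V}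
    {K : FinDigraph} {w : K.V}
    (h₁ : InTreeIso G u H v) (h₂ : InTreeIso H v K w) : InTreeIso G u K w := by
  obtain ⟨F, fr, fl, fp⟩ := h₁
  obtain ⟨F', gr, gl, gp⟩ := h₂
  refine ⟨F.trans F', ?_, ?_, ?_⟩
  · simp [Equiv.trans_apply, fr, gr]
  · intro p; simp [Equiv.trans_apply, gl, fl]
  · intro p; simp [Equiv.trans_apply, fp, gp]

/-- The setoid of fibration equivalence (isomorphism of input trees). -/
def fibSetoid (G : FinDigraph) : Setoid G.V :=
  ⟨fibEquiv G, ⟨fun u => inTreeIso_refl G u, inTreeIso_symm, inTreeIso_trans⟩⟩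

/-- The minimal fibration base of `G`: nodes are the fibers (input-tree isomorphism
classes), and the edges from a fiber `C'` into a fiber `C` are the edges of `G` from
nodes of `C'` into the chosen representative of `C`. -/
def base (G : FinDigraph) : FinDigraph where
  V := Quotient (fibSetoid G)
  E := {e : G.E // G.tgt e = (Quotient.mk (fibSetoid G) (G.tgt e)).out}
  src e := Quotient.mk (fibSetoid G) (G.src e.1)
  tgt e := Quotient.mk (fibSetoid G) (G.tgt e.1)

/-- The fiber of a node, as a node of the minimal base. -/
def fibClass (G : FinDigraph) (u : G.V) : (base G).V := Quotient.mk (fibSetoid G) u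

/-- A partition (given as an equivalence relation) is balanced if any two equivalent
nodes receive the same number of edges from each class. -/
def IsBalanced (G : FinDigraph) (r : G.V → G.V → Prop) : Prop :=
  Equivalence r ∧ ∀ u v, r u v → ∀ w : G.V,
    Nat.card {e : G.E // G.tgt e = u ∧ r (G.src e) w} =
    Nat.card {e : G.E // G.tgt e = v ∧ r (G.src e) w}

/-- The multiset of states of the in-neighbors of `u` (with edge multiplicity). -/
noncomputable def inStates (G : FinDigraph) {S : Type} (x : G.V → S) (u : G.V) :
    Multiset S :=
  letI := Fintype.ofFinite G.E
  letI := Classical.decEq G.V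
  (Finset.univ.filter (fun e => G.tgt e = u)).val.map fun e => x (G.src e)

end FinDigraph

/-- there is a finite directed graph with two nodes that have isomorphic
input trees but are not related by any automorphism. -/
theorem fib_strictly_weaker_than_orbit :
    ∃ (G : FinDigraph) (u v : G.V),
      FinDigraph.InTreeIso G u G v ∧ ¬ FinDigraph.orbitEquiv G u v := by
  refine ⟨⟨Fin 3, Unit, fun _ => 1, fun _ => 2⟩, 0, 1, ?_, ?_⟩
  · have key : ∀ (w : Fin 3), w ≠ 2 →
        ∀ l, FinDigraph.IsInPath ⟨Fin 3, Unit, fun _ => 1, fun _ => 2⟩ w l → l = [] := by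
      intro w hw l hl
      cases l with
      | nil => rfl
      | cons e es =>
        exfalso
        obtain ⟨h1, h2⟩ := hl
        cases es with
        | nil => exact hw h2.symm
        | cons e' es' =>
          have h3 : (2 : Fin 3) = 1 := h2
          exact absurd h3 (by decide)
    refine ⟨⟨fun p => ⟨[], trivial⟩, fun p => ⟨[], trivial⟩, ?_, ?_⟩, rfl, ?_, ?_⟩
    · intro p; exact Subtype.ext ((key 0 (by decide) p.1 p.2).symm)
    · intro p; exact Subtype.ext ((key 1 (by decide) p.1 p.2).symm)
    · intro p
      have := key 0 (by decide) p.1 p.2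
      simp [this]
      rfl
    · intro p; rfl
  · rintro ⟨φ, hV, hE, h01⟩
    have h1 : φ.onV 1 = 1 := by
      have := φ.map_src ()
      simpa using this.symm
    exact absurd (hV.1 (h01.trans h1.symm)) (by decide)
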